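/- Let (P, ω) be a finite labeled poset, let A be the adjacency matrix of its ω-graph (rows/columns indexed by ideals of P, with entry 1 in position (I,J) iff I ⊊ J and J∖I is an ω-natural subset), and suppose the ideals are ordered so that A is strictly upper triangular. Then for every positive integer n, the (∅, P) entry of (I + A)^n equals the number of ω-order-preserving maps f: P → [n]. -/

import Mathlib

open scoped Classical

/-- `I` is an order ideal (down-set) of the finite poset `P`. -/
def IsIdeal {P : Type*} [PartialOrder P] (I : Finset P) : Prop :=
  ∀ x ∈ I, ∀ y : P, y ≤ x → y ∈ I

/-- A subset `S` is `ω`-natural if `ω` restricted to `S` is order-preserving. -/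
def IsNatural {P : Type*} [PartialOrder P] (ω : P → ℕ+) (S : Finset P) : Prop :=
  ∀ x ∈ S, ∀ y ∈ S, x ≤ y → ω x ≤ ω y

/-- `f : P → [n]` is `ω`-order-preserving: it is order-preserving, and whenever `x > y`
with `ω x < ω y` we have `f x > f y`. -/
def IsOmegaOP {P : Type*} [PartialOrder P] (ω : P → ℕ+) {n : ℕ} (f : P → Fin n) : Prop :=
  Monotone f ∧ ∀ x y : P, y < x → ω x < ω y → f y < f x

/-- The adjacency matrix of the `ω`-graph: rows/columns indexed by ideals, with entry `1`
in position `(I, J)` iff `I ⊊ J` and `J ∖ I` is `ω`-natural. -/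
noncomputable def omegaAdjMatrix {P : Type*} [Fintype P] [PartialOrder P] (ω : P → ℕ+) :
    Matrix {I : Finset P // IsIdeal I} {I : Finset P // IsIdeal I} ℚ :=
  fun I J => if I.1 ⊂ J.1 ∧ IsNatural ω (J.1 \ I.1) then 1 else 0

namespace St17

variable {P : Type*} [Fintype P] [PartialOrder P]

abbrev Idl (P : Type*) [Fintype P] [PartialOrder P] := {I : Finset P // IsIdeal I}

def Rel (ω : P → ℕ+) (I J : Idl P) : Prop := I.1 ⊆ J.1 ∧ IsNatural ω (J.1 \ I.1)

lemma one_add_apply (ω : P → ℕ+) (I J : Idl P) :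
    (1 + omegaAdjMatrix ω) I J = if Rel ω I J then 1 else 0 := by
  by_cases h : I = J
  · subst h
    have h1 : ¬ (I.1 ⊂ I.1) := fun hc => hc.2 hc.1
    have h2 : Rel ω I I := ⟨subset_rfl, by intro x hx; rw [Finset.sdiff_self] at hx; exact absurd hx (Finset.notMem_empty x)⟩
    simp [Matrix.add_apply, Matrix.one_apply, omegaAdjMatrix, h1, h2]
  · have h' : I.1 ≠ J.1 := fun hh => h (Subtype.ext hh)
    have h2 : (I.1 ⊂ J.1) ↔ I.1 ⊆ J.1 := by
      constructor
      · exact fun hs => hs.1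
      · intro hs; exact hs.ssubset_of_ne h'
    simp only [Matrix.add_apply, Matrix.one_apply_ne h, omegaAdjMatrix, Rel, zero_add, h2]
    split <;> simp_all

abbrev Ch (ω : P → ℕ+) (n : ℕ) (I J : Idl P) :=
  {g : Fin (n+1) → Idl P // g 0 = I ∧ g (Fin.last n) = J ∧
    ∀ k : Fin n, Rel ω (g k.castSucc) (g k.succ)}

lemma card_ch_zero (ω : P → ℕ+) (I J : Idl P) :
    Nat.card (Ch ω 0 I J) = if I = J then 1 else 0 := by
  rcases eq_or_ne I J with h | h
  · subst h
    rw [if_pos rfl]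
    rw [Nat.card_eq_one_iff_unique]
    constructor
    · refine ⟨fun a b => ?_⟩
      apply Subtype.ext; funext i
      have hi : i = 0 := Fin.ext (by omega)
      rw [hi, a.2.1, b.2.1]
    · exact ⟨⟨fun _ => I, rfl, rfl, fun k => k.elim0⟩⟩
  · rw [if_neg h]
    have : IsEmpty (Ch ω 0 I J) := by
      refine ⟨fun g => h ?_⟩
      have h1 := g.2.1
      have h2 := g.2.2.1
      exact h1.symm.trans h2
    exact Nat.card_of_isEmpty


def chSnoc (ω : P → ℕ+) (n : ℕ) (I J : Idl P)
    (x : Σ K : Idl P, Ch ω n I K × PLift (Rel ω K J)) : Ch ω (n+1) I J :=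
  ⟨Fin.snoc x.2.1.1 J, by
      rw [show (0 : Fin (n+2)) = Fin.castSucc 0 by simp, Fin.snoc_castSucc]
      exact x.2.1.2.1,
    Fin.snoc_last _ _, by
      intro k
      induction k using Fin.lastCases with
      | last =>
          rw [Fin.succ_last, Fin.snoc_last, Fin.snoc_castSucc]
          rw [x.2.1.2.2.1]
          exact x.2.2.down
      | cast j =>
          rw [Fin.succ_castSucc, Fin.snoc_castSucc, Fin.snoc_castSucc]
          exact x.2.1.2.2.2 j⟩

lemma chSnoc_bijective (ω : P → ℕ+) (n : ℕ) (I J : Idl P) :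
    Function.Bijective (chSnoc ω n I J) := by
  constructor
  · rintro ⟨K₁, g₁, h₁⟩ ⟨K₂, g₂, h₂⟩ h
    have hg : (Fin.snoc g₁.1 J : Fin (n+2) → Idl P) = Fin.snoc g₂.1 J :=
      congrArg Subtype.val h
    have hfun : g₁.1 = g₂.1 := by
      funext i
      have := congrFun hg i.castSucc
      rwa [Fin.snoc_castSucc, Fin.snoc_castSucc] at this
    have hK : K₁ = K₂ := by
      rw [← g₁.2.2.1, ← g₂.2.2.1, hfun]
    subst hK
    have : g₁ = g₂ := Subtype.ext hfun
    subst this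
    have : h₁ = h₂ := Subsingleton.elim _ _
    subst this
    rfl
  · intro g
    refine ⟨⟨g.1 (Fin.castSucc (Fin.last n)),
      ⟨fun i => g.1 i.castSucc, by simpa using g.2.1, rfl, ?_⟩, ⟨?_⟩⟩, ?_⟩
    · intro k
      have := g.2.2.2 k.castSucc
      rwa [Fin.succ_castSucc] at this
    · have := g.2.2.2 (Fin.last n)
      rwa [Fin.succ_last, g.2.2.1] at this
    · apply Subtype.ext
      show (Fin.snoc (fun i => g.1 i.castSucc) J : Fin (n+2) → Idl P) = g.1
      funext i
      induction i using Fin.lastCases with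
      | last => rw [Fin.snoc_last, g.2.2.1]
      | cast j => rw [Fin.snoc_castSucc]

lemma card_plift (p : Prop) : Nat.card (PLift p) = if p then 1 else 0 := by
  by_cases hp : p
  · rw [if_pos hp, Nat.card_eq_one_iff_unique]
    exact ⟨⟨fun a b => by cases a; cases b; rfl⟩, ⟨⟨hp⟩⟩⟩
  · rw [if_neg hp]
    have : IsEmpty (PLift p) := ⟨fun a => hp a.down⟩
    exact Nat.card_of_isEmpty

lemma card_ch_succ (ω : P → ℕ+) (n : ℕ) (I J : Idl P) :
    Nat.card (Ch ω (n+1) I J)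
      = ∑ K : Idl P, Nat.card (Ch ω n I K) * (if Rel ω K J then 1 else 0) := by
  rw [← Nat.card_eq_of_bijective _ (chSnoc_bijective ω n I J)]
  rw [Nat.card_eq_fintype_card, Fintype.card_sigma]
  apply Finset.sum_congr rfl
  intro K _
  rw [Fintype.card_prod, ← Nat.card_eq_fintype_card, ← Nat.card_eq_fintype_card (α := PLift _),
    card_plift]

lemma pow_apply (ω : P → ℕ+) (n : ℕ) (I J : Idl P) :
    ((1 + omegaAdjMatrix ω) ^ n) I J = (Nat.card (Ch ω n I J) : ℚ) := by
  induction n generalizing J with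
  | zero =>
      rw [pow_zero, Matrix.one_apply, card_ch_zero]
      split_ifs <;> simp
  | succ n ih =>
      rw [pow_succ, Matrix.mul_apply, card_ch_succ]
      push_cast
      apply Finset.sum_congr rfl
      intro K _
      rw [ih, one_add_apply]


lemma ch_mono (ω : P → ℕ+) {n : ℕ} {I J : Idl P} (g : Ch ω n I J) :
    ∀ a b : Fin (n+1), a ≤ b → (g.1 a).1 ⊆ (g.1 b).1 := by
  have key : ∀ m : ℕ, ∀ hm : m < n+1, ∀ a : Fin (n+1), a ≤ ⟨m, hm⟩ →
      (g.1 a).1 ⊆ (g.1 ⟨m, hm⟩).1 := by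
    intro m
    induction m with
    | zero =>
        intro hm a ha
        have : a = ⟨0, hm⟩ := Fin.ext (by exact Nat.le_zero.mp ha)
        rw [this]
    | succ m ih =>
        intro hm a ha
        by_cases hc : (a : ℕ) ≤ m
        · have hm' : m < n + 1 := by omega
          have hmn : m < n := by omega
          refine (ih hm' a hc).trans ?_
          have step := (g.2.2.2 ⟨m, hmn⟩).1
          have e1 : (Fin.castSucc ⟨m, hmn⟩ : Fin (n+1)) = ⟨m, hm'⟩ := rfl
          have e2 : (Fin.succ ⟨m, hmn⟩ : Fin (n+1)) = ⟨m+1, hm⟩ := rfl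
          rwa [e1, e2] at step
        · have hc' : m < (a : ℕ) := Nat.lt_of_not_le hc
          have ha' : (a : ℕ) ≤ m + 1 := by simpa [Fin.le_def] using ha
          have : a = ⟨m+1, hm⟩ := Fin.ext (by show (a:ℕ) = m+1; omega)
          rw [this]
  intro a b hab
  have : b = ⟨(b : ℕ), b.isLt⟩ := rfl
  rw [this]
  exact key b b.isLt a hab

variable (ω : P → ℕ+)

noncomputable def botI : Idl P := ⟨∅, by intro x hx; simp at hx⟩
noncomputable def topI : Idl P := ⟨Finset.univ, fun x _ y _ => Finset.mem_univ y⟩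

noncomputable def toCh (hω : Function.Injective ω) {n : ℕ}
    (f : {f : P → Fin n // IsOmegaOP ω f}) : Ch ω n (botI (P := P)) (topI (P := P)) := by
  refine ⟨fun i => ⟨Finset.univ.filter (fun x => (f.1 x : ℕ) < (i : ℕ)), ?_⟩, ?_, ?_, ?_⟩
  · intro x hx y hy
    simp only [Finset.mem_filter, Finset.mem_univ, true_and] at hx ⊢
    exact lt_of_le_of_lt (f.2.1 hy) hx
  · apply Subtype.ext
    simp [botI]
  · apply Subtype.ext
    show Finset.univ.filter (fun x => (f.1 x : ℕ) < ((Fin.last n : Fin (n+1)) : ℕ)) = _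
    simp only [Fin.val_last, topI]
    apply Finset.ext
    intro x
    simp [(f.1 x).isLt]
  · intro k
    constructor
    · intro x hx
      simp only [Finset.mem_filter, Finset.mem_univ, true_and, Fin.coe_castSucc,
        Fin.val_succ] at hx ⊢
      omega
    · intro x hx y hy hxy
      simp only [Finset.mem_sdiff, Finset.mem_filter, Finset.mem_univ, true_and,
        Fin.coe_castSucc, Fin.val_succ] at hx hy
      have hfx : (f.1 x : ℕ) = (k : ℕ) := by omega
      have hfy : (f.1 y : ℕ) = (k : ℕ) := by omega
      rcases eq_or_lt_of_le hxy with h | h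
      · rw [h]
      · by_contra hcon
        push_neg at hcon
        have hlt := f.2.2 y x h hcon
        rw [Fin.lt_def] at hlt
        omega

lemma toCh_bijective (hω : Function.Injective ω) (n : ℕ) :
    Function.Bijective (toCh ω hω (n := n)) := by
  constructor
  · intro f₁ f₂ h
    apply Subtype.ext
    funext x
    have key : ∀ i : Fin (n+1), ((f₁.1 x : ℕ) < (i : ℕ)) ↔ ((f₂.1 x : ℕ) < (i : ℕ)) := by
      intro i
      have := congrArg (fun c => x ∈ (c.1 i).1) h
      simpa [toCh] using this
    have h1 := (key (f₁.1 x).succ).mp (by simp)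
    have h2 := (key (f₂.1 x).succ).mpr (by simp)
    simp only [Fin.val_succ] at h1 h2
    exact Fin.ext (by omega)
  · intro g
    -- every x lies in the top and not in the bottom
    have hbot : ∀ x : P, x ∉ (g.1 0).1 := by
      intro x
      rw [g.2.1]
      simp [botI]
    have htop : ∀ x : P, x ∈ (g.1 (Fin.last n)).1 := by
      intro x
      rw [g.2.2.1]
      simp [topI]
    have hTne : ∀ x : P, (Finset.univ.filter (fun i : Fin (n+1) => x ∈ (g.1 i).1)).Nonempty :=
      fun x => ⟨Fin.last n, by simp [htop x]⟩
    set m : P → Fin (n+1) := fun x => (Finset.univ.filter (fun i : Fin (n+1) => x ∈ (g.1 i).1)).min' (hTne x) with hm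
    have hmem : ∀ x, x ∈ (g.1 (m x)).1 := by
      intro x
      have := Finset.min'_mem _ (hTne x)
      simpa using this
    have hmin : ∀ x (i : Fin (n+1)), x ∈ (g.1 i).1 → m x ≤ i := by
      intro x i hi
      exact Finset.min'_le _ _ (by simp [hi])
    have hm0 : ∀ x, (m x : ℕ) ≠ 0 := by
      intro x h0
      refine hbot x ?_
      have hmx : m x = 0 := Fin.ext h0
      have h2 := hmem x
      rw [hmx] at h2
      exact h2
    have hmn : ∀ x, (m x : ℕ) - 1 < n := by
      intro x
      have := (m x).isLt
      have := hm0 x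
      omega
    set f : P → Fin n := fun x => ⟨(m x : ℕ) - 1, hmn x⟩ with hf
    have key : ∀ (x : P) (i : Fin (n+1)), x ∈ (g.1 i).1 ↔ (f x : ℕ) < (i : ℕ) := by
      intro x i
      constructor
      · intro hi
        have := hmin x i hi
        have := hm0 x
        simp only [hf, Fin.le_def] at *
        omega
      · intro hi
        have hle : m x ≤ i := by
          rw [Fin.le_def]
          simp only [hf] at hi
          have := hm0 x
          omega
        exact ch_mono ω g (m x) i hle (hmem x)
    have hOP : IsOmegaOP ω f := by
      constructor
      · intro x y hxy
        have hx : x ∈ (g.1 (m y)).1 := (g.1 _).2 y (hmem y) x hxy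
        have hle := hmin x _ hx
        rw [Fin.le_def] at hle
        simp only [hf, Fin.le_def]
        omega
      · intro x y hyx hω'
        have hle : f y ≤ f x := by
          have hy : y ∈ (g.1 (m x)).1 := (g.1 _).2 x (hmem x) y hyx.le
          have hle := hmin y _ hy
          rw [Fin.le_def] at hle
          simp only [hf, Fin.le_def]
          omega
        rcases eq_or_lt_of_le hle with he | h
        · exfalso
          -- both in the difference at step f x
          have hfxn : ((f x) : ℕ) < n := (f x).isLt
          set k : Fin n := f x with hk
          have hx1 : x ∈ (g.1 k.succ).1 := (key x _).mpr (by simp [hk])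
          have hx2 : x ∉ (g.1 k.castSucc).1 := by
            intro hc
            have := (key x _).mp hc
            simp [hk] at this
          have hy1 : y ∈ (g.1 k.succ).1 := (key y _).mpr (by simp [← he])
          have hy2 : y ∉ (g.1 k.castSucc).1 := by
            intro hc
            have := (key y _).mp hc
            rw [← he] at this
            simp at this
          have hnat := (g.2.2.2 k).2
          have := hnat y (Finset.mem_sdiff.mpr ⟨hy1, hy2⟩) x (Finset.mem_sdiff.mpr ⟨hx1, hx2⟩) hyx.le
          exact absurd hω' (not_lt.mpr this)
        · exact h
    refine ⟨⟨f, hOP⟩, ?_⟩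
    apply Subtype.ext
    funext i
    apply Subtype.ext
    show Finset.univ.filter (fun x => ((f x : ℕ) < (i : ℕ))) = (g.1 i).1
    apply Finset.ext
    intro x
    simp only [Finset.mem_filter, Finset.mem_univ, true_and]
    exact (key x i).symm

end St17

/-- Let `(P, ω)` be a finite labeled poset and `A` the adjacency matrix of its `ω`-graph,
with the ideals ordered (by a rank function `r`) so that `A` is strictly upper triangular.
Then for every `n ≥ 1`, the `(∅, P)` entry of `(I + A)^n` is the number of
`ω`-order-preserving maps `P → [n]`. -/
theorem stmt_17 {P : Type*} [Fintype P] [PartialOrder P]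
    (ω : P → ℕ+) (hω : Function.Injective ω)
    (r : {I : Finset P // IsIdeal I} → ℕ)
    (hr : ∀ I J, omegaAdjMatrix ω I J ≠ 0 → r I < r J) :
    ∀ n : ℕ, 1 ≤ n →
      ((1 + omegaAdjMatrix ω) ^ n)
          ⟨∅, by intro x hx; simp at hx⟩
          ⟨Finset.univ, fun x _ y _ => Finset.mem_univ y⟩
        = (Nat.card {f : P → Fin n // IsOmegaOP ω f} : ℚ) := by
  intro n hn
  rw [St17.pow_apply]
  congr 1
  exact (Nat.card_eq_of_bijective _ (St17.toCh_bijective ω hω n)).symm
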